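/- Let K ≥ 2, τ ∈ ℝ, and let (μ_k)_{k=1}^K be a concave sequence of reals such that μ_{k*} > τ for at least one k*; set Δ_min = min_{j∈[K]} |μ_j − τ|. Then for every k ∈ {1, …, K−1} such that μ_k < τ or μ_{k+1} < τ, one has |μ_k − μ_{k+1}| ≥ 2·Δ_min. -/
import Mathlib


/-- A finite sequence `(μ_k)_{k=1}^K` is concave if `μ_{k-1} + μ_{k+1} ≤ 2 μ_k`
for all `1 < k < K` (here stated with 0-based indices). -/
def ConcaveSeq {K : ℕ} (μ : Fin K → ℝ) : Prop :=
  ∀ (i : ℕ) (h : i + 2 < K),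
    μ ⟨i, by omega⟩ + μ ⟨i + 2, h⟩ ≤ 2 * μ ⟨i + 1, by omega⟩

lemma incr_mono {K : ℕ} (μ : Fin K → ℝ) (hconc : ConcaveSeq μ) :
    ∀ (n i : ℕ) (h : i + n + 1 < K),
      μ ⟨i + n + 1, h⟩ - μ ⟨i + n, by omega⟩ ≤ μ ⟨i + 1, by omega⟩ - μ ⟨i, by omega⟩ := by
  intro n
  induction n with
  | zero => intro i h; simp
  | succ m ih =>
      intro i h
      have h1 : i + m + 2 < K := by omega
      have hc := hconc (i + m) h1
      have h2 := ih i (by omega)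
      have e1 : (⟨i + (m + 1) + 1, h⟩ : Fin K) = ⟨i + m + 2, by omega⟩ := by
        apply Fin.ext; simp; omega
      have e2 : (⟨i + (m + 1), by omega⟩ : Fin K) = ⟨i + m + 1, by omega⟩ := by
        apply Fin.ext; simp; omega
      rw [e1, e2]
      linarith

lemma cross_up {K : ℕ} (τ : ℝ) (μ : Fin K → ℝ) :
    ∀ (b : ℕ) (hb : b < K) (a : ℕ) (ha : a < K), a < b → μ ⟨a, ha⟩ ≤ τ →
      τ < μ ⟨b, hb⟩ →
      ∃ (c : ℕ) (hc : c + 1 < K), a ≤ c ∧ μ ⟨c, by omega⟩ ≤ τ ∧ τ < μ ⟨c + 1, hc⟩ := by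
  intro b
  induction b using Nat.strong_induction_on with
  | _ b IH =>
      intro hb a ha hab hμa hμb
      obtain ⟨b', rfl⟩ : ∃ b', b = b' + 1 := ⟨b - 1, by omega⟩
      by_cases hb' : μ ⟨b', by omega⟩ ≤ τ
      · exact ⟨b', hb, by omega, hb', hμb⟩
      · have hab' : a < b' := by
          rcases Nat.lt_or_ge a b' with h | h
          · exact h
          · have : a = b' := by omega
            subst this; exact absurd hμa hb'
        exact IH b' (by omega) (by omega) a ha hab' hμa (not_le.mp hb')

lemma cross_down {K : ℕ} (τ : ℝ) (μ : Fin K → ℝ) :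
    ∀ (b : ℕ) (hb : b < K) (a : ℕ) (ha : a < K), a < b → τ < μ ⟨a, ha⟩ →
      μ ⟨b, hb⟩ ≤ τ →
      ∃ (c : ℕ) (hc : c + 1 ≤ b), a ≤ c ∧ τ < μ ⟨c, by omega⟩ ∧ μ ⟨c + 1, by omega⟩ ≤ τ := by
  intro b
  induction b using Nat.strong_induction_on with
  | _ b IH =>
      intro hb a ha hab hμa hμb
      obtain ⟨b', rfl⟩ : ∃ b', b = b' + 1 := ⟨b - 1, by omega⟩
      by_cases hb' : τ < μ ⟨b', by omega⟩
      · exact ⟨b', le_refl _, by omega, hb', hμb⟩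
      · have hab' : a < b' := by
          rcases Nat.lt_or_ge a b' with h | h
          · exact h
          · have : a = b' := by omega
            subst this; exact absurd hμa hb'
        obtain ⟨c, hc1, hc2, hc3, hc4⟩ :=
          IH b' (by omega) (by omega) a ha hab' hμa (not_lt.mp hb')
        exact ⟨c, by omega, hc2, hc3, hc4⟩

/-- For a concave sequence with at least one mean above the threshold, any two consecutive
means at least one of which is below the threshold differ by at least `2·Δ_min`. -/
theorem concave_consecutive_gap
    (K : ℕ) (hK : 2 ≤ K) (τ : ℝ) (μ : Fin K → ℝ) (hconc : ConcaveSeq μ)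
    (habove : ∃ kstar, τ < μ kstar) :
    ∀ (i : ℕ) (h : i + 1 < K),
      (μ ⟨i, by omega⟩ < τ ∨ μ ⟨i + 1, h⟩ < τ) →
      2 * (⨅ j, |μ j - τ|) ≤ |μ ⟨i, by omega⟩ - μ ⟨i + 1, h⟩| := by
  intro i h hyp
  have hne : Nonempty (Fin K) := ⟨⟨0, by omega⟩⟩
  have hΔ : ∀ j : Fin K, (⨅ j, |μ j - τ|) ≤ |μ j - τ| := by
    intro j
    exact ciInf_le ⟨0, by rintro x ⟨k, rfl⟩; positivity⟩ j
  set Δ := ⨅ j, |μ j - τ| with hΔdef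
  set x := μ ⟨i, by omega⟩ with hx
  set y := μ ⟨i + 1, h⟩ with hy
  have hΔx : Δ ≤ |x - τ| := hΔ _
  have hΔy : Δ ≤ |y - τ| := hΔ _
  rcases le_or_gt τ y with hyτ | hyτ
  · -- y above, so x below
    have hxτ : x < τ := by rcases hyp with h' | h'; exact h'; linarith
    have h1 : |x - τ| = τ - x := by rw [abs_of_neg (by linarith)]; ring
    have h2 : |y - τ| = y - τ := abs_of_nonneg (by linarith)
    have : 2 * Δ ≤ y - x := by rw [h1] at hΔx; rw [h2] at hΔy; linarith
    calc 2 * Δ ≤ y - x := this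
      _ ≤ |x - y| := by rw [abs_sub_comm]; exact le_abs_self _
  · rcases le_or_gt τ x with hxτ | hxτ
    · have h1 : |x - τ| = x - τ := abs_of_nonneg (by linarith)
      have h2 : |y - τ| = τ - y := by rw [abs_of_neg (by linarith)]; ring
      have : 2 * Δ ≤ x - y := by rw [h1] at hΔx; rw [h2] at hΔy; linarith
      exact this.trans (le_abs_self _)
    · -- both below τ
      obtain ⟨kstar, hks⟩ := habove
      have hksi : (kstar : ℕ) ≠ i := by
        intro e
        have : μ ⟨i, by omega⟩ = μ kstar := by congr 1; exact Fin.ext e.symm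
        rw [← hx] at this; linarith [this ▸ hks]
      have hksi1 : (kstar : ℕ) ≠ i + 1 := by
        intro e
        have : μ ⟨i + 1, h⟩ = μ kstar := by congr 1; exact Fin.ext e.symm
        rw [← hy] at this; linarith [this ▸ hks]
      rcases Nat.lt_or_ge (kstar : ℕ) i with hlt | hge
      · -- kstar < i : downward crossing between kstar and i
        have hμk : τ < μ ⟨(kstar : ℕ), kstar.2⟩ := by
          have : (⟨(kstar : ℕ), kstar.2⟩ : Fin K) = kstar := Fin.ext rfl
          rw [this]; exact hks
        obtain ⟨c, hc1, hc2, hc3, hc4⟩ :=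
          cross_down τ μ i (by omega) (kstar : ℕ) kstar.2 hlt hμk (le_of_lt hxτ)
        -- d_c = μ_{c+1} - μ_c ≤ -2Δ
        have hΔc : Δ ≤ |μ (⟨c, by omega⟩ : Fin K) - τ| := hΔ _
        have hΔc1 : Δ ≤ |μ (⟨c + 1, by omega⟩ : Fin K) - τ| := hΔ _
        have e1 : |μ (⟨c, by omega⟩ : Fin K) - τ| = μ (⟨c, by omega⟩ : Fin K) - τ :=
          abs_of_nonneg (by linarith)
        have e2 : |μ (⟨c + 1, by omega⟩ : Fin K) - τ| = τ - μ (⟨c + 1, by omega⟩ : Fin K) := by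
          rw [abs_of_nonpos (by linarith)]; ring
        have hdc : μ (⟨c + 1, by omega⟩ : Fin K) - μ (⟨c, by omega⟩ : Fin K) ≤ -(2 * Δ) := by
          rw [e1] at hΔc; rw [e2] at hΔc1; linarith
        -- d_i ≤ d_c since c ≤ i
        have hmono := incr_mono μ hconc (i - c) c (by omega)
        have ec1 : (⟨c + (i - c) + 1, by omega⟩ : Fin K) = ⟨i + 1, h⟩ := by
          apply Fin.ext; simp; omega
        have ec2 : (⟨c + (i - c), by omega⟩ : Fin K) = ⟨i, by omega⟩ := by
          apply Fin.ext; simp; omega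
        rw [ec1, ec2] at hmono
        have : 2 * Δ ≤ x - y := by rw [hx, hy]; linarith
        exact this.trans (le_abs_self _)
      · -- kstar > i + 1 : upward crossing between i+1 and kstar
        have hgt : i + 1 < (kstar : ℕ) := by omega
        have hμk : τ < μ ⟨(kstar : ℕ), kstar.2⟩ := by
          have : (⟨(kstar : ℕ), kstar.2⟩ : Fin K) = kstar := Fin.ext rfl
          rw [this]; exact hks
        obtain ⟨c, hcK, hc2, hc3, hc4⟩ :=
          cross_up τ μ (kstar : ℕ) kstar.2 (i + 1) h hgt (le_of_lt hyτ) hμk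
        have hΔc : Δ ≤ |μ (⟨c, by omega⟩ : Fin K) - τ| := hΔ _
        have hΔc1 : Δ ≤ |μ (⟨c + 1, hcK⟩ : Fin K) - τ| := hΔ _
        have e1 : |μ (⟨c, by omega⟩ : Fin K) - τ| = τ - μ (⟨c, by omega⟩ : Fin K) := by
          rw [abs_of_nonpos (by linarith)]; ring
        have e2 : |μ (⟨c + 1, hcK⟩ : Fin K) - τ| = μ (⟨c + 1, hcK⟩ : Fin K) - τ :=
          abs_of_nonneg (by linarith)
        have hdc : 2 * Δ ≤ μ (⟨c + 1, hcK⟩ : Fin K) - μ (⟨c, by omega⟩ : Fin K) := by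
          rw [e1] at hΔc; rw [e2] at hΔc1; linarith
        have hmono := incr_mono μ hconc (c - i) i (by omega)
        have ec1 : (⟨i + (c - i) + 1, by omega⟩ : Fin K) = ⟨c + 1, hcK⟩ := by
          apply Fin.ext; simp; omega
        have ec2 : (⟨i + (c - i), by omega⟩ : Fin K) = ⟨c, by omega⟩ := by
          apply Fin.ext; simp; omega
        rw [ec1, ec2] at hmono
        have : 2 * Δ ≤ y - x := by rw [hx, hy]; linarith
        calc 2 * Δ ≤ y - x := this
          _ ≤ |x - y| := by rw [abs_sub_comm]; exact le_abs_self _
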